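/- arXiv:2203.02279 — 3 statements merged into one kernel-verified Lean document; each statement's English description precedes it below -/
import Mathlib

section
/- Let K be an algebraically closed field with a nonarchimedean multiplicative norm |·| (e.g. K = ℂ_p). Let P ∈ K[z] be a polynomial of degree n ≥ 2 such that |n| = 1 (in the case K = ℂ_p this means p does not divide n). If all roots of P lie in the disk D(a,r), then all roots of the derivative P′ also lie in D(a,r). In other words, for such n the exact analogue of the Gauss–Lucas theorem holds: every disk containing the zeros of P contains all zeros of P′. -/
open Polynomial

private lemma multiset_sum_norm_le {K : Type*} [NormedField K]
    (hna : ∀ x y : K, ‖x + y‖ ≤ max ‖x‖ ‖y‖)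
    (m : Multiset K) (C : ℝ) (hC : 0 ≤ C) (h : ∀ x ∈ m, ‖x‖ ≤ C) :
    ‖m.sum‖ ≤ C := by
  induction m using Multiset.induction with
  | empty => simpa using hC
  | cons x s ih =>
      rw [Multiset.sum_cons]
      refine (hna x s.sum).trans (max_le (h x (Multiset.mem_cons_self x s)) ?_)
      exact ih fun y hy => h y (Multiset.mem_cons_of_mem hy)

private lemma multiset_sum_map_sub {K : Type*} [NormedField K]
    (m : Multiset K) (f g : K → K) :
    (m.map f).sum - (m.map g).sum = (m.map fun i => f i - g i).sum := by
  induction m using Multiset.induction with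
  | empty => simp
  | cons x s ih => simp only [Multiset.map_cons, Multiset.sum_cons, ← ih]; ring

private lemma prod_diff_bound {K : Type*} [NormedField K]
    (hna : ∀ x y : K, ‖x + y‖ ≤ max ‖x‖ ‖y‖)
    (a ω : K) (r : ℝ) (hr : 0 ≤ r) (hs : r < ‖ω - a‖)
    (m : Multiset K) (hm : ∀ z ∈ m, ‖z - a‖ ≤ r) :
    ‖(m.map fun z => ω - z).prod - (ω - a) ^ Multiset.card m‖
      ≤ r * ‖ω - a‖ ^ Multiset.card m / ‖ω - a‖ := by
  set s := ‖ω - a‖ with hsdef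
  have hs0 : 0 < s := lt_of_le_of_lt hr hs
  induction m using Multiset.induction with
  | empty =>
      simp only [Multiset.map_zero, Multiset.prod_zero, Multiset.card_zero, pow_zero,
        sub_self, norm_zero]
      positivity
  | cons x t ih =>
      have hx : ‖x - a‖ ≤ r := hm x (Multiset.mem_cons_self x t)
      have iht := ih fun z hz => hm z (Multiset.mem_cons_of_mem hz)
      set k := Multiset.card t with hk
      have hcard : Multiset.card (x ::ₘ t) = k + 1 := by simp [hk]
      rw [hcard, Multiset.map_cons, Multiset.prod_cons]
      have hsplit : (ω - x) * (t.map fun z => ω - z).prod - (ω - a) ^ (k + 1)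
          = (ω - x) * ((t.map fun z => ω - z).prod - (ω - a) ^ k)
            + (a - x) * (ω - a) ^ k := by ring
      rw [hsplit]
      have hωx : ‖ω - x‖ ≤ s := by
        have : ω - x = (ω - a) + (a - x) := by ring
        rw [this]
        refine (hna _ _).trans (max_le le_rfl ?_)
        calc ‖a - x‖ = ‖x - a‖ := by rw [← norm_neg]; ring_nf
        _ ≤ r := hx
        _ ≤ s := le_of_lt hs
      have h1 : ‖(ω - x) * ((t.map fun z => ω - z).prod - (ω - a) ^ k)‖ ≤ r * s ^ k := by
        rw [norm_mul]
        calc ‖ω - x‖ * ‖(t.map fun z => ω - z).prod - (ω - a) ^ k‖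
            ≤ s * (r * s ^ k / s) := by
              apply mul_le_mul hωx iht (norm_nonneg _) (le_of_lt hs0)
          _ = r * s ^ k := by field_simp
      have h2 : ‖(a - x) * (ω - a) ^ k‖ ≤ r * s ^ k := by
        rw [norm_mul, norm_pow]
        have hax : ‖a - x‖ ≤ r := by
          calc ‖a - x‖ = ‖x - a‖ := by rw [← norm_neg]; ring_nf
          _ ≤ r := hx
        exact mul_le_mul_of_nonneg_right hax (by positivity)
      refine (hna _ _).trans ?_
      have : r * s ^ (k + 1) / s = r * s ^ k := by
        rw [pow_succ]; field_simp
      rw [this]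
      exact max_le h1 h2

/-- **Corollary 3 (exact Gauss–Lucas analogue).** If `P` has degree `n ≥ 2` with
`|n| = 1` over an algebraically closed nonarchimedean normed field and all roots of
`P` lie in the disk `D(a, r)`, then all roots of `P'` lie in `D(a, r)` as well. -/
theorem stmt3 {K : Type*} [NormedField K] [IsAlgClosed K]
    (hna : ∀ x y : K, ‖x + y‖ ≤ max ‖x‖ ‖y‖)
    (P : K[X]) (n : ℕ) (hn : 2 ≤ n) (hdeg : P.natDegree = n)
    (hnorm : ‖(n : K)‖ = 1)
    (a : K) (r : ℝ) (hr : 0 ≤ r)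
    (hroots : ∀ z ∈ P.roots, ‖z - a‖ ≤ r) :
    ∀ ω ∈ P.derivative.roots, ‖ω - a‖ ≤ r := by
  classical
  intro ω hω
  by_contra hcon
  push_neg at hcon
  set s := ‖ω - a‖ with hsdef
  have hs0 : 0 < s := lt_of_le_of_lt hr hcon
  -- P ≠ 0 and its roots
  have hP0 : P ≠ 0 := by
    intro h; rw [h, natDegree_zero] at hdeg; omega
  have hsplits : P.Splits := IsAlgClosed.splits P
  have hcard : Multiset.card P.roots = n := by
    rw [splits_iff_card_roots.mp hsplits, hdeg]
  have hPfact : C P.leadingCoeff * (P.roots.map fun z => X - C z).prod = P :=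
    C_leadingCoeff_mul_prod_multiset_X_sub_C (by rw [hcard, hdeg])
  have hlc : P.leadingCoeff ≠ 0 := leadingCoeff_ne_zero.mpr hP0
  -- ω is a root of P'
  have hωroot : eval ω P.derivative = 0 := by
    exact (mem_roots'.mp hω).2
  -- derivative of the product vanishes at ω
  have hQ : eval ω (derivative (P.roots.map fun z => X - C z).prod) = 0 := by
    have : derivative P = C P.leadingCoeff *
        derivative (P.roots.map fun z => X - C z).prod := by
      conv_lhs => rw [← hPfact]
      rw [derivative_mul, derivative_C, zero_mul, zero_add]
    rw [this, eval_mul, eval_C] at hωroot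
    exact (mul_eq_zero.mp hωroot).resolve_left hlc
  -- expand the derivative of the product
  have hder : derivative (P.roots.map fun z => X - C z).prod
      = (P.roots.map fun i => ((P.roots.erase i).map fun z => X - C z).prod * 1).sum := by
    rw [derivative_prod]
    congr 1
    exact Multiset.map_congr rfl fun i _ => by rw [derivative_sub, derivative_X, derivative_C,
      sub_zero]
  have hQsum : (P.roots.map fun i => ((P.roots.erase i).map fun z => ω - z).prod).sum = 0 := by
    rw [hder] at hQ
    rw [← hQ, show eval ω = evalRingHom ω from rfl, map_multiset_sum (evalRingHom ω),
      Multiset.map_map]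
    congr 1
    refine Multiset.map_congr rfl fun i _ => ?_
    simp only [Function.comp_apply, coe_evalRingHom, eval_mul, eval_one, mul_one, eval_multiset_prod, Multiset.map_map]
    congr 1
    exact Multiset.map_congr rfl fun z _ => by simp
  -- each term of the sum is close to (ω - a)^(n-1)
  have hterm : ∀ i ∈ P.roots,
      ‖((P.roots.erase i).map fun z => ω - z).prod - (ω - a) ^ (n - 1)‖
        ≤ r * s ^ (n - 1) / s := by
    intro i hi
    have hcard' : Multiset.card (P.roots.erase i) = n - 1 := by
      rw [Multiset.card_erase_of_mem hi, hcard]; rfl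
    have := prod_diff_bound hna a ω r hr hcon (P.roots.erase i)
      (fun z hz => hroots z (Multiset.mem_of_mem_erase hz))
    rwa [hcard'] at this
  -- the sum of the constants equals n * (ω - a)^(n - 1)
  have hconst : (P.roots.map fun _ => (ω - a) ^ (n - 1)).sum = (n : K) * (ω - a) ^ (n - 1) := by
    rw [Multiset.map_const', Multiset.sum_replicate, hcard, nsmul_eq_mul]
  -- the key estimate
  have hkey : ‖(0 : K) - (n : K) * (ω - a) ^ (n - 1)‖ ≤ r * s ^ (n - 1) / s := by
    rw [← hQsum, ← hconst, multiset_sum_map_sub]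
    refine multiset_sum_norm_le hna _ _ (by positivity) ?_
    intro x hx
    obtain ⟨i, hi, rfl⟩ := Multiset.mem_map.mp hx
    exact hterm i hi
  rw [zero_sub, norm_neg, norm_mul, hnorm, one_mul, norm_pow, ← hsdef] at hkey
  have hlt : r * s ^ (n - 1) / s < s ^ (n - 1) := by
    rw [div_lt_iff₀ hs0]
    have hp : (0:ℝ) < s ^ (n - 1) := by positivity
    calc r * s ^ (n - 1) < s * s ^ (n - 1) := by
          exact mul_lt_mul_of_pos_right hcon hp
      _ = s ^ (n - 1) * s := by ring
  linarith
end

section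
/- Let K be an algebraically closed field with a nonarchimedean multiplicative norm |·| (e.g. K = ℂ_p). Let P ∈ K[z] be a monic polynomial of degree n ≥ 2 whose roots λ₁,…,λₙ (with multiplicity) satisfy |λ_i| ≤ r for all i, and let ω₁,…,ω_{n−1} be the roots of P′ (with multiplicity), ordered so that |ω₁| ≤ |ω₂| ≤ ⋯ ≤ |ω_{n−1}|. Then for every k = 1, 2, …, n−1, |ω_k| ≤ r · max{ |j/n|^{1/(n−j)} : j = 1, 2, …, k }. -/
open Polynomial IsUltrametricDist

section AuxStmt4

variable {K : Type*} [NormedField K] [IsUltrametricDist K]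

lemma aux_dom {a b : K} (h : ‖b‖ < ‖a‖) : ‖a + b‖ = ‖a‖ := by
  rcases eq_or_ne ‖a‖ ‖b‖ with he | hne
  · exact absurd he (ne_of_gt h)
  · rw [norm_add_eq_max_of_norm_ne_norm hne, max_eq_left h.le]

lemma aux_monic (s : Multiset K) : ((s.map fun a => X - C a).prod).Monic :=
  monic_multiset_prod_of_monic _ _ fun a _ => monic_X_sub_C a

lemma aux_deg (s : Multiset K) : ((s.map fun a => X - C a).prod).natDegree = Multiset.card s := by
  rw [natDegree_multiset_prod_of_monic _ fun a ha => ?_]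
  · simp [Multiset.map_map, Function.comp]
  · rcases Multiset.mem_map.mp ha with ⟨x, _, rfl⟩
    exact monic_X_sub_C x

lemma aux_coeffA (B : ℝ) (hB0 : 0 ≤ B) (s : Multiset K) (hB : ∀ x ∈ s, ‖x‖ ≤ B) (j : ℕ) :
    ‖((s.map fun a => X - C a).prod).coeff j‖ ≤ B ^ (Multiset.card s - j) := by
  induction s using Multiset.induction generalizing j with
  | empty => cases j <;> simp [coeff_one, hB0]
  | cons a s ih =>
    have ha : ‖a‖ ≤ B := hB a (Multiset.mem_cons_self a s)
    have hs : ∀ x ∈ s, ‖x‖ ≤ B := fun x hx => hB x (Multiset.mem_cons_of_mem hx)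
    set Q := (s.map fun a => X - C a).prod with hQ
    have hQd : Q.natDegree = Multiset.card s := aux_deg s
    rw [Multiset.map_cons, Multiset.prod_cons, Multiset.card_cons]
    have hexp : (X - C a) * Q = X * Q - C a * Q := by ring
    rw [hexp]
    cases j with
    | zero =>
      simp only [coeff_sub, coeff_X_mul_zero, coeff_C_mul, zero_sub, norm_neg, norm_mul]
      calc ‖a‖ * ‖Q.coeff 0‖ ≤ B * B ^ (Multiset.card s - 0) :=
            mul_le_mul ha (ih hs 0) (norm_nonneg _) hB0
        _ ≤ B ^ (Multiset.card s + 1 - 0) := by rw [← pow_succ']; simp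
    | succ j =>
      rw [coeff_sub, coeff_X_mul, coeff_C_mul, sub_eq_add_neg]
      refine le_trans (norm_add_le_max _ _) (max_le ?_ ?_)
      · calc ‖Q.coeff j‖ ≤ B ^ (Multiset.card s - j) := ih hs j
          _ ≤ B ^ (Multiset.card s + 1 - (j+1)) := by
              apply le_of_eq; congr 1; omega
      · rw [norm_neg, norm_mul]
        rcases le_or_gt (j+1) (Multiset.card s) with hle | hlt
        · calc ‖a‖ * ‖Q.coeff (j+1)‖ ≤ B * B ^ (Multiset.card s - (j+1)) :=
              mul_le_mul ha (ih hs (j+1)) (norm_nonneg _) hB0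
            _ = B ^ (Multiset.card s + 1 - (j+1)) := by rw [← pow_succ']; congr 1; omega
        · have : Q.coeff (j+1) = 0 := coeff_eq_zero_of_natDegree_lt (by omega)
          simp only [this, norm_zero, mul_zero]
          positivity

lemma aux_coeffB (b : ℝ) (hb : 0 < b) (s : Multiset K) (h : ∀ x ∈ s, b ≤ ‖x‖) (j : ℕ) :
    ‖((s.map fun a => X - C a).prod).coeff j‖ ≤ (s.map fun x => ‖x‖).prod / b ^ j := by
  induction s using Multiset.induction generalizing j with
  | empty =>
    cases j
    · simp
    · simp only [Multiset.map_zero, Multiset.prod_zero, coeff_one]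
      rw [if_neg (by omega)]
      simp only [norm_zero]
      positivity
  | cons a s ih =>
    have ha : b ≤ ‖a‖ := h a (Multiset.mem_cons_self a s)
    have hs : ∀ x ∈ s, b ≤ ‖x‖ := fun x hx => h x (Multiset.mem_cons_of_mem hx)
    have hTnn : (0:ℝ) ≤ (s.map fun x => ‖x‖).prod :=
      Multiset.prod_nonneg (by intro x hx; rcases Multiset.mem_map.mp hx with ⟨y,_,rfl⟩; positivity)
    set Q := (s.map fun a => X - C a).prod with hQ
    rw [Multiset.map_cons, Multiset.prod_cons, Multiset.map_cons, Multiset.prod_cons]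
    have hexp : (X - C a) * Q = X * Q - C a * Q := by ring
    rw [hexp]
    cases j with
    | zero =>
      simp only [coeff_sub, coeff_X_mul_zero, coeff_C_mul, zero_sub, norm_neg, norm_mul, pow_zero,
        div_one]
      exact mul_le_mul_of_nonneg_left (by simpa using ih hs 0) (norm_nonneg a)
    | succ j =>
      rw [coeff_sub, coeff_X_mul, coeff_C_mul, sub_eq_add_neg]
      refine le_trans (norm_add_le_max _ _) (max_le ?_ ?_)
      · calc ‖Q.coeff j‖ ≤ (s.map fun x => ‖x‖).prod / b ^ j := ih hs j
          _ = b * (s.map fun x => ‖x‖).prod / b ^ (j+1) := by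
              rw [pow_succ']; field_simp
          _ ≤ ‖a‖ * (s.map fun x => ‖x‖).prod / b ^ (j+1) := by
              apply div_le_div_of_nonneg_right ?_ (by positivity) |>.trans_eq rfl
              exact mul_le_mul_of_nonneg_right ha hTnn
      · rw [norm_neg, norm_mul]
        calc ‖a‖ * ‖Q.coeff (j+1)‖ ≤ ‖a‖ * ((s.map fun x => ‖x‖).prod / b ^ (j+1)) :=
              mul_le_mul_of_nonneg_left (ih hs (j+1)) (norm_nonneg a)
          _ = ‖a‖ * (s.map fun x => ‖x‖).prod / b ^ (j+1) := by ring

lemma aux_coeff0 (s : Multiset K) :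
    ‖((s.map fun a => X - C a).prod).coeff 0‖ = (s.map fun x => ‖x‖).prod := by
  rw [← constantCoeff_apply, map_multiset_prod]
  induction s using Multiset.induction with
  | empty => simp
  | cons a s ih =>
    simp only [Multiset.map_cons, Multiset.prod_cons, norm_mul, ih]
    simp [constantCoeff_apply]


end AuxStmt4

/-- **Main theorem, norm-ordered form.** Let `P` be a monic polynomial of degree
`n ≥ 2` over an algebraically closed nonarchimedean normed field, all of whose roots
satisfy `‖λ‖ ≤ r`, and let `ω 0, …, ω (n-2)` enumerate the roots of `P'` (with
multiplicity) in order of non-decreasing norm.  Then the `k`-th root (1-indexed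
`k = k.val + 1`) satisfies `‖ω k‖ ≤ r * max { |j/n|^(1/(n-j)) : j = 1, …, k+1 }`. -/
theorem stmt4 {K : Type*} [NormedField K] [IsAlgClosed K]
    (hna : ∀ x y : K, ‖x + y‖ ≤ max ‖x‖ ‖y‖)
    (P : K[X]) (n : ℕ) (hn : 2 ≤ n) (hmonic : P.Monic) (hdeg : P.natDegree = n)
    (r : ℝ) (hroots : ∀ z ∈ P.roots, ‖z‖ ≤ r)
    (ω : Fin (n - 1) → K)
    (hω : P.derivative.roots = (List.ofFn ω : Multiset K))
    (hmono : Monotone fun i => ‖ω i‖) :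
    ∀ k : Fin (n - 1),
      ‖ω k‖ ≤ r * (Finset.Icc 1 (k.val + 1)).sup'
        (Finset.nonempty_Icc.mpr (Nat.succ_le_succ (Nat.zero_le _)))
        (fun j => ‖((j : K) / (n : K))‖ ^ (1 / ((n : ℝ) - (j : ℕ)))) := by
  classical
  haveI : IsUltrametricDist K :=
    IsUltrametricDist.isUltrametricDist_of_forall_norm_add_le_max_norm hna
  intro k
  set M := (Finset.Icc 1 (k.val + 1)).sup'
      (Finset.nonempty_Icc.mpr (Nat.succ_le_succ (Nat.zero_le _)))
      (fun j => ‖((j : K) / (n : K))‖ ^ (1 / ((n : ℝ) - (j : ℕ)))) with hM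
  -- basic facts about P
  have hP0 : P ≠ 0 := hmonic.ne_zero
  have hsplits : P.Splits := IsAlgClosed.splits P
  have hcardP : Multiset.card P.roots = n := by
    rw [splits_iff_card_roots.mp hsplits, hdeg]
  have hr0 : 0 ≤ r := by
    have : ∃ z, z ∈ P.roots := by
      rw [← Multiset.card_pos_iff_exists_mem, hcardP]; omega
    obtain ⟨z, hz⟩ := this
    exact le_trans (norm_nonneg z) (hroots z hz)
  have hPcoeff : ∀ j, ‖P.coeff j‖ ≤ r ^ (n - j) := by
    intro j
    have hPe : P = (P.roots.map fun a => X - C a).prod := by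
      have := hsplits.eq_prod_roots
      rwa [hmonic.leadingCoeff, map_one, one_mul] at this
    calc ‖P.coeff j‖ = ‖((P.roots.map fun a => X - C a).prod).coeff j‖ := by rw [← hPe]
      _ ≤ r ^ (Multiset.card P.roots - j) := aux_coeffA r hr0 _ hroots j
      _ = r ^ (n - j) := by rw [hcardP]
  -- basic facts about P'
  have hcard' : Multiset.card P.derivative.roots = n - 1 := by
    rw [hω]; simp
  have hd0 : P.derivative ≠ 0 := by
    intro h
    rw [h, roots_zero] at hcard'
    simp at hcard'; omega
  have hndeg : P.derivative.natDegree = n - 1 := by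
    have h1 : P.derivative.natDegree < n := by
      rw [← hdeg]; exact natDegree_derivative_lt (by omega)
    have h2 : n - 1 ≤ P.derivative.natDegree := hcard' ▸ card_roots' _
    omega
  have hlc : P.derivative.coeff (n - 1) = (n : K) := by
    rw [coeff_derivative, (by omega : n - 1 + 1 = n)]
    have hc1 : P.coeff n = 1 := by rw [← hdeg]; exact hmonic.coeff_natDegree
    have hc2 : ((n - 1 : ℕ) : K) = (n : K) - 1 := by
      push_cast [Nat.cast_sub (by omega : 1 ≤ n)]; ring
    rw [hc1, one_mul, hc2]; ring
  have hnK : (n : K) ≠ 0 := by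
    rw [← hlc, ← hndeg]
    exact mt leadingCoeff_eq_zero.mp hd0
  -- the factorization of P'
  set ω' : ℕ → K := fun i => if h : i < n - 1 then ω ⟨i, h⟩ else 0 with hω'
  have hωω' : ∀ i : Fin (n - 1), ω i = ω' i.val := by
    intro i; rw [hω']; simp [i.isLt]
  have hfact : P.derivative = C (n : K) * ∏ i ∈ Finset.range (n - 1), (X - C (ω' i)) := by
    have he := (IsAlgClosed.splits P.derivative).eq_prod_roots
    rw [hω] at he
    have hlcn : P.derivative.leadingCoeff = (n : K) := by
      rw [leadingCoeff, hndeg]; exact hlc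
    rw [he, hlcn]
    congr 1
    rw [Multiset.map_coe, Multiset.prod_coe, List.map_ofFn, List.prod_ofFn]
    rw [← Fin.prod_univ_eq_prod_range (fun i => X - C (ω' i)) (n - 1)]
    exact Finset.prod_congr rfl fun i _ => by simp only [Function.comp_apply]; rw [hωω' i]
  -- now the main argument, by contradiction
  by_contra hcon
  push_neg at hcon
  set h := ‖ω k‖ with hh
  have hM0 : 0 ≤ M := by
    refine le_trans ?_ (Finset.le_sup' _ (Finset.mem_Icc.mpr ⟨le_refl 1, by omega⟩))
    positivity
  have hpos : 0 < h := lt_of_le_of_lt (by positivity) hcon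
  -- minimal index with norm equal to ‖ω k‖
  have hex : ∃ i, ∃ hi : i < n - 1, ‖ω ⟨i, hi⟩‖ = h := ⟨k.val, k.isLt, by rw [hh]⟩
  set t := Nat.find hex with ht
  obtain ⟨htlt, hteq⟩ := Nat.find_spec hex
  have htk : t ≤ k.val := Nat.find_le ⟨k.isLt, by rw [hh]⟩
  have hlt_lower : ∀ i (hi : i < n - 1), i < t → ‖ω ⟨i, hi⟩‖ < h := by
    intro i hi hit
    have hne := Nat.find_min hex hit
    push_neg at hne
    have hle : ‖ω ⟨i, hi⟩‖ ≤ h := by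
      have : (⟨i, hi⟩ : Fin (n - 1)) ≤ k := by
        simp [Fin.le_def]; omega
      exact hmono this
    exact lt_of_le_of_ne hle (hne hi)
  have hge_upper : ∀ i (hi : i < n - 1), t ≤ i → h ≤ ‖ω ⟨i, hi⟩‖ := by
    intro i hi hti
    calc h = ‖ω ⟨t, htlt⟩‖ := hteq.symm
      _ ≤ ‖ω ⟨i, hi⟩‖ := hmono (by simp [Fin.le_def]; omega)
  -- multisets of lower and upper roots
  set sS : Multiset K := (Finset.range t).val.map ω' with hsS
  set sR : Multiset K := (Finset.Ico t (n - 1)).val.map ω' with hsR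
  have hcardS : Multiset.card sS = t := by simp [hsS]
  have hcardR : Multiset.card sR = n - 1 - t := by simp [hsR]
  set B : ℝ := if ht0 : t = 0 then 0 else ‖ω' (t - 1)‖ with hB
  have hB0 : 0 ≤ B := by rw [hB]; split <;> positivity
  have hBh : B < h := by
    rw [hB]; split
    · exact hpos
    · next ht0 =>
      have h1 : t - 1 < n - 1 := by omega
      have : ω' (t - 1) = ω ⟨t - 1, h1⟩ := by rw [hω']; simp [h1]
      rw [this]
      exact hlt_lower _ h1 (by omega)
  have hSmem : ∀ x ∈ sS, ‖x‖ ≤ B := by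
    intro x hx
    rcases Multiset.mem_map.mp hx with ⟨i, hi, rfl⟩
    rw [Finset.mem_val, Finset.mem_range] at hi
    have ht0 : t ≠ 0 := by omega
    rw [hB, dif_neg ht0]
    have h1 : t - 1 < n - 1 := by omega
    have h2 : i < n - 1 := by omega
    have e1 : ω' (t - 1) = ω ⟨t - 1, h1⟩ := by rw [hω']; simp [h1]
    have e2 : ω' i = ω ⟨i, h2⟩ := by rw [hω']; simp [h2]
    rw [e1, e2]
    exact hmono (by simp [Fin.le_def]; omega)
  have hRmem : ∀ x ∈ sR, h ≤ ‖x‖ := by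
    intro x hx
    rcases Multiset.mem_map.mp hx with ⟨i, hi, rfl⟩
    rw [Finset.mem_val, Finset.mem_Ico] at hi
    have h2 : i < n - 1 := hi.2
    have e2 : ω' i = ω ⟨i, h2⟩ := by rw [hω']; simp [h2]
    rw [e2]
    exact hge_upper i h2 hi.1
  set T : ℝ := (sR.map fun x => ‖x‖).prod with hT
  have hTge : h ^ (n - 1 - t) ≤ T := by
    rw [hT, hsR, Multiset.map_map, ← Finset.prod_eq_multiset_prod]
    calc h ^ (n - 1 - t) = ∏ i ∈ Finset.Ico t (n - 1), h := by
          rw [Finset.prod_const, Nat.card_Ico]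
      _ ≤ ∏ i ∈ Finset.Ico t (n - 1), ‖ω' i‖ := by
          refine Finset.prod_le_prod (fun i _ => hpos.le) (fun i hi => ?_)
          exact hRmem _ (Multiset.mem_map_of_mem _ (Finset.mem_val.mpr hi))
  have hTpos : 0 < T := lt_of_lt_of_le (by positivity) hTge
  -- split the product
  set Sp : K[X] := (sS.map fun a => X - C a).prod with hSp
  set Rp : K[X] := (sR.map fun a => X - C a).prod with hRp
  have hsplit : ∏ i ∈ Finset.range (n - 1), (X - C (ω' i)) = Sp * Rp := by
    rw [← Finset.prod_range_mul_prod_Ico _ (by omega : t ≤ n - 1)]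
    rw [hSp, hRp, hsS, hsR, Multiset.map_map, Multiset.map_map]
    rw [Finset.prod_eq_multiset_prod, Finset.prod_eq_multiset_prod]
    rfl
  -- coefficient of P' at t
  have hcoefft : P.derivative.coeff t = (n : K) * (Sp * Rp).coeff t := by
    rw [hfact, hsplit, coeff_C_mul]
  -- norm of the coefficient of Sp * Rp at t, by dominance
  have hSpt : Sp.coeff t = 1 := by
    have h1 : Sp.Monic := aux_monic sS
    have h2 : Sp.natDegree = t := by rw [hSp, aux_deg, hcardS]
    rw [← h2]; exact h1.coeff_natDegree
  have hRp0 : ‖Rp.coeff 0‖ = T := aux_coeff0 sR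
  have hdomsum : ‖(Sp * Rp).coeff t‖ = T := by
    rw [coeff_mul]
    have hmem : ((t, 0) : ℕ × ℕ) ∈ Finset.HasAntidiagonal.antidiagonal t := by
      simp [Finset.mem_antidiagonal]
    rw [← Finset.add_sum_erase _ _ hmem]
    have hrest : ‖∑ x ∈ (Finset.HasAntidiagonal.antidiagonal t).erase (t, 0),
        Sp.coeff x.1 * Rp.coeff x.2‖ ≤ B / h * T := by
      refine IsUltrametricDist.norm_sum_le_of_forall_le_of_nonneg (by positivity) ?_
      intro x hx
      rw [Finset.mem_erase, Finset.HasAntidiagonal.mem_antidiagonal] at hx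
      have hx1 : x.1 < t := by
        rcases hx with ⟨hne, hsum⟩
        by_contra hge
        push_neg at hge
        have : x.1 = t := by omega
        apply hne
        have : x.2 = 0 := by omega
        exact Prod.ext (by omega) this
      have hx2 : x.2 ≠ 0 := by omega
      have hb1 : ‖Sp.coeff x.1‖ ≤ B ^ x.2 := by
        have := aux_coeffA B hB0 sS hSmem x.1
        rwa [hcardS, (by omega : t - x.1 = x.2)] at this
      have hb2 : ‖Rp.coeff x.2‖ ≤ T / h ^ x.2 := aux_coeffB h hpos sR hRmem x.2
      calc ‖Sp.coeff x.1 * Rp.coeff x.2‖ = ‖Sp.coeff x.1‖ * ‖Rp.coeff x.2‖ := norm_mul _ _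
        _ ≤ B ^ x.2 * (T / h ^ x.2) :=
            mul_le_mul hb1 hb2 (norm_nonneg _) (by positivity)
        _ = (B / h) ^ x.2 * T := by
            rw [div_pow]; field_simp
        _ ≤ (B / h) ^ 1 * T := by
            refine mul_le_mul_of_nonneg_right ?_ hTpos.le
            exact pow_le_pow_of_le_one (by positivity) (by
              rw [div_le_one hpos]; exact hBh.le) (by omega)
        _ = B / h * T := by ring
    have hlt : ‖∑ x ∈ (Finset.HasAntidiagonal.antidiagonal t).erase (t, 0),
        Sp.coeff x.1 * Rp.coeff x.2‖ < ‖Sp.coeff t * Rp.coeff 0‖ := by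
      rw [hSpt, one_mul, hRp0]
      refine lt_of_le_of_lt hrest ?_
      calc B / h * T < 1 * T := by
            refine mul_lt_mul_of_pos_right ?_ hTpos
            rw [div_lt_one hpos]; exact hBh
        _ = T := one_mul T
    rw [aux_dom hlt, hSpt, one_mul, hRp0]
  -- derive the key inequality
  have hkey : ‖(n : K)‖ * T ≤ ‖((t + 1 : ℕ) : K)‖ * r ^ (n - 1 - t) := by
    have e1 : ‖P.derivative.coeff t‖ = ‖(n : K)‖ * T := by
      rw [hcoefft, norm_mul, hdomsum]
    have e2 : P.derivative.coeff t = P.coeff (t + 1) * ((t : K) + 1) := coeff_derivative P t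
    rw [e2] at e1
    have e3 : ((t : K) + 1) = ((t + 1 : ℕ) : K) := by push_cast; ring
    rw [e3, norm_mul] at e1
    rw [← e1, mul_comm]
    refine mul_le_mul_of_nonneg_left ?_ (norm_nonneg _)
    have := hPcoeff (t + 1)
    rwa [(by omega : n - (t + 1) = n - 1 - t)] at this
  -- conclude
  set m : ℕ := n - 1 - t with hm
  have hm1 : 1 ≤ m := by omega
  set c : ℝ := ‖(((t + 1 : ℕ) : K)) / (n : K)‖ with hc
  have hnKpos : 0 < ‖(n : K)‖ := norm_pos_iff.mpr hnK
  have hc0 : 0 ≤ c := norm_nonneg _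
  have hkey2 : h ^ m ≤ c * r ^ m := by
    have h1 : ‖(n : K)‖ * h ^ m ≤ ‖(n : K)‖ * T :=
      mul_le_mul_of_nonneg_left hTge (norm_nonneg _)
    have h2 := le_trans h1 hkey
    rw [hc, norm_div]
    rw [div_mul_eq_mul_div, le_div_iff₀ hnKpos, mul_comm (h ^ m)]
    calc ‖(n:K)‖ * h ^ m ≤ ‖((t + 1 : ℕ) : K)‖ * r ^ m := h2
      _ = ‖((t + 1 : ℕ) : K)‖ * r ^ m := rfl
  have hfin : h ≤ r * (c ^ (1 / (m : ℝ))) := by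
    have hmR : (0 : ℝ) < (m : ℝ) := by exact_mod_cast hm1
    have e1 : h = (h ^ m) ^ (1 / (m : ℝ) : ℝ) := by
      rw [← Real.rpow_natCast h m, ← Real.rpow_mul hpos.le]
      rw [mul_one_div, div_self hmR.ne', Real.rpow_one]
    rw [e1]
    calc (h ^ m) ^ (1 / (m : ℝ) : ℝ) ≤ (c * r ^ m) ^ (1 / (m : ℝ) : ℝ) := by
          refine Real.rpow_le_rpow (by positivity) hkey2 (by positivity)
      _ = c ^ (1 / (m : ℝ) : ℝ) * (r ^ m) ^ (1 / (m : ℝ) : ℝ) := by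
          rw [Real.mul_rpow hc0 (by positivity)]
      _ = c ^ (1 / (m : ℝ) : ℝ) * r := by
          rw [← Real.rpow_natCast r m, ← Real.rpow_mul hr0,
            mul_one_div, div_self hmR.ne', Real.rpow_one]
      _ = r * (c ^ (1 / (m : ℝ))) := by ring
  have hsup : c ^ (1 / (m : ℝ)) ≤ M := by
    have hmem : t + 1 ∈ Finset.Icc 1 (k.val + 1) := Finset.mem_Icc.mpr ⟨by omega, by omega⟩
    have hle := Finset.le_sup'
      (f := fun j : ℕ => ‖((j : K) / (n : K))‖ ^ (1 / ((n : ℝ) - (j : ℕ)))) hmem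
    have e : (m : ℝ) = (n : ℝ) - ((t + 1 : ℕ) : ℝ) := by
      have hmn : (m : ℝ) + ((t + 1 : ℕ) : ℝ) = (n : ℝ) := by
        exact_mod_cast congrArg (Nat.cast : ℕ → ℝ) (by omega : m + (t + 1) = n)
      linarith
    refine le_trans (le_of_eq ?_) hle
    rw [hc, e]
  have : h ≤ r * M := le_trans hfin (mul_le_mul_of_nonneg_left hsup hr0)
  exact absurd hcon (not_lt.mpr this)
end

section
/- In the field ℚ₃ of 3-adic numbers with its standard norm, consider the polynomial P(z) = z²(z − 1) = z³ − z². All roots of P (namely 0 with multiplicity 2 and 1) lie in the disk D(0,1) = {z : |z| ≤ 1}, while the derivative P′(z) = 3z(z − 2/3) has roots 0 and 2/3 with |2/3| = 3; hence the root 2/3 of P′ does not lie in D(0,1), and every disk D(0,s) containing all roots of P′ must have s ≥ 3 = |3|^{−1}·1. This shows the bound r·|n|^{−1} in the Gauss–Lucas analogue cannot be improved. -/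
open Polynomial

theorem aux_norm23 : ‖(2/3 : ℚ_[3])‖ = 3 := by
  have h : (2/3 : ℚ_[3]) = ((2/3 : ℚ) : ℚ_[3]) := by push_cast; ring
  have hv : padicValRat 3 (2/3) = -1 := by
    rw [padicValRat.div (by norm_num) (by norm_num)]
    have h2 : padicValRat 3 2 = 0 := by
      simp [padicValRat, padicValInt, padicValNat.eq_zero_of_not_dvd (p := 3) (n := 2) (by decide)]
    have h3 : padicValRat 3 3 = 1 := by
      simp [padicValRat, padicValInt, padicValNat.self (p := 3) (by decide)]
    rw [h2, h3]; ring
  rw [h, Padic.eq_padicNorm]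
  rw [padicNorm.eq_zpow_of_nonzero (by norm_num), hv]
  norm_num

theorem aux_rootsP : (X ^ 3 - X ^ 2 : Polynomial ℚ_[3]).roots = {0, 0, 1} := by
  have hfac : (X ^ 3 - X ^ 2 : Polynomial ℚ_[3]) = X ^ 2 * (X - C 1) := by
    rw [C_1]; ring
  have hne : (X ^ 2 * (X - C 1) : Polynomial ℚ_[3]) ≠ 0 := by
    rw [← hfac]; intro hc
    have := congrArg (fun p => p.coeff 3) hc
    simp at this
  rw [hfac, roots_mul hne, roots_pow, roots_X, roots_X_sub_C]
  rfl

theorem aux_derivP : (X ^ 3 - X ^ 2 : Polynomial ℚ_[3]).derivative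
    = C 3 * (X * (X - C (2/3))) := by
  have h1 : (C 3 * (X * (X - C (2/3))) : Polynomial ℚ_[3]) = C 3 * X ^ 2 - C (3 * (2/3)) * X := by
    rw [C_mul]; ring
  rw [h1]
  norm_num

theorem aux_derivRoots : (X ^ 3 - X ^ 2 : Polynomial ℚ_[3]).derivative.roots = {0, 2 / 3} := by
  rw [aux_derivP, roots_C_mul _ (by norm_num : (3:ℚ_[3]) ≠ 0)]
  have hne : (X * (X - C (2/3)) : Polynomial ℚ_[3]) ≠ 0 := by
    intro hc
    have := congrArg (fun p => p.coeff 2) hc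
    simp at this
  rw [roots_mul hne, roots_X, roots_X_sub_C]
  rfl

/-- **Sharpness example over `ℚ₃`.** For `P(z) = z³ - z² = z²(z-1)` over the
3-adic numbers: the roots of `P` are `0, 0, 1`, all in the disk `D(0,1)`; the
derivative `P'(z) = 3z(z - 2/3)` has roots `0` and `2/3`, with `‖2/3‖ = 3 > 1`,
so `2/3 ∉ D(0,1)` and any disk `D(0,s)` containing all roots of `P'` has `s ≥ 3`.
Hence the bound `r·|n|⁻¹` in the Gauss–Lucas analogue cannot be improved. -/
theorem stmt8 :
    (X ^ 3 - X ^ 2 : Polynomial ℚ_[3]).roots = {0, 0, 1} ∧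
    (∀ z : ℚ_[3], (X ^ 3 - X ^ 2 : Polynomial ℚ_[3]).IsRoot z → ‖z‖ ≤ 1) ∧
    (X ^ 3 - X ^ 2 : Polynomial ℚ_[3]).derivative.roots = {0, 2 / 3} ∧
    (X ^ 3 - X ^ 2 : Polynomial ℚ_[3]).derivative.IsRoot (2 / 3 : ℚ_[3]) ∧
    ‖(2 / 3 : ℚ_[3])‖ = 3 ∧
    ¬ ‖(2 / 3 : ℚ_[3])‖ ≤ 1 ∧
    ∀ s : ℝ, (∀ z : ℚ_[3], (X ^ 3 - X ^ 2 : Polynomial ℚ_[3]).derivative.IsRoot z →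
      ‖z‖ ≤ s) → 3 ≤ s := by
  have hroot : (X ^ 3 - X ^ 2 : Polynomial ℚ_[3]).derivative.IsRoot (2 / 3 : ℚ_[3]) := by
    rw [aux_derivP]
    simp [IsRoot]
  refine ⟨aux_rootsP, ?_, aux_derivRoots, hroot, aux_norm23, by rw [aux_norm23]; norm_num, ?_⟩
  · intro z hz
    simp only [IsRoot, eval_sub, eval_pow, eval_X] at hz
    have : z ^ 2 * (z - 1) = 0 := by ring_nf; linear_combination hz
    rcases mul_eq_zero.1 this with h | h
    · have : z = 0 := by
        have := pow_eq_zero_iff (n := 2) (by norm_num) |>.1 h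
        exact this
      simp [this]
    · rw [sub_eq_zero.1 h]; simp
  · intro s hs
    have := hs (2/3) hroot
    rwa [aux_norm23] at this
end
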